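/- Let A₁, A₂ be 2×2 upper-triangular complex matrices which are each diagonalisable but not simultaneously diagonalisable, each with spectral radius 1 and |det A₁| = |det A₂| = 1. Then there exist a sequence σ: ℕ → {1,2} and a nonzero vector v ∈ ℂ² such that lim inf_{n→∞} (1/n)‖A_{σ(n)}···A_{σ(1)} v‖ > 0. -/

import Mathlib

open Finset Matrix


/-- Product A_{σ(n)} ⋯ A_{σ(1)}. -/
noncomputable def prodW {N : ℕ} (A : Fin N → Matrix (Fin 2) (Fin 2) ℂ) (σ : ℕ → Fin N) :
    ℕ → Matrix (Fin 2) (Fin 2) ℂ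
  | 0 => 1
  | n + 1 => A (σ (n + 1)) * prodW A σ n


lemma spec_tri (A : Matrix (Fin 2) (Fin 2) ℂ) (h : A 1 0 = 0) :
    spectrum ℂ A = {A 0 0, A 1 1} := by
  ext z
  rw [spectrum.mem_iff, Matrix.isUnit_iff_isUnit_det]
  rw [Matrix.det_fin_two]
  have e1 : ((algebraMap ℂ (Matrix (Fin 2) (Fin 2) ℂ)) z - A) 1 0 = -A 1 0 := by
    simp [Matrix.algebraMap_matrix_apply]
  have e0 : ∀ i, ((algebraMap ℂ (Matrix (Fin 2) (Fin 2) ℂ)) z - A) i i = z - A i i := by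
    intro i; simp [Matrix.algebraMap_matrix_apply]
  rw [e1, e0, e0, h]
  simp only [neg_zero, mul_zero, sub_zero, isUnit_iff_ne_zero, not_not, mul_eq_zero,
    sub_eq_zero, Set.mem_insert_iff, Set.mem_singleton_iff]

lemma unimod (A : Matrix (Fin 2) (Fin 2) ℂ) (h : A 1 0 = 0)
    (hsr : spectralRadius ℂ A = 1) (hdet : ‖A.det‖ = 1) :
    ‖A 0 0‖ = 1 ∧ ‖A 1 1‖ = 1 := by
  have hs : spectralRadius ℂ A = (‖A 0 0‖₊ : ENNReal) ⊔ (‖A 1 1‖₊ : ENNReal) := by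
    rw [spectralRadius, spec_tri A h]
    rw [_root_.iSup_insert, _root_.iSup_singleton]
  rw [hs] at hsr
  have h0 : (‖A 0 0‖₊ : ENNReal) ≤ 1 := le_sup_left.trans hsr.le
  have h1 : (‖A 1 1‖₊ : ENNReal) ≤ 1 := le_sup_right.trans hsr.le
  have h0' : ‖A 0 0‖ ≤ 1 := by
    simpa [← NNReal.coe_le_coe] using (ENNReal.coe_le_one_iff.mp h0)
  have h1' : ‖A 1 1‖ ≤ 1 := by
    simpa [← NNReal.coe_le_coe] using (ENNReal.coe_le_one_iff.mp h1)
  have hd : ‖A 0 0‖ * ‖A 1 1‖ = 1 := by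
    rw [← norm_mul]
    rw [Matrix.det_fin_two, h] at hdet
    simpa using hdet
  constructor
  · nlinarith [norm_nonneg (A 0 0), norm_nonneg (A 1 1)]
  · nlinarith [norm_nonneg (A 0 0), norm_nonneg (A 1 1)]

lemma smul1 (x : ℂ) : x • (1 : Matrix (Fin 2) (Fin 2) ℂ) = !![x, 0; 0, x] := by
  rw [Matrix.smul_one_eq_diagonal]
  rw [show (Matrix.diagonal fun _ : Fin 2 => x) = !![x, 0; 0, x] from ?_]
  ext i j
  fin_cases i <;> fin_cases j <;> simp [Matrix.diagonal]

lemma isDiag_of (x y : ℂ) : (!![x, 0; 0, y] : Matrix (Fin 2) (Fin 2) ℂ).IsDiag := by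
  intro i j hij
  fin_cases i <;> fin_cases j <;> simp_all

lemma conj_eq (P A D : Matrix (Fin 2) (Fin 2) ℂ) (hP : IsUnit P.det)
    (hAP : A * P = P * D) : P⁻¹ * A * P = D := by
  rw [Matrix.mul_assoc, hAP, ← Matrix.mul_assoc, Matrix.nonsing_inv_mul P hP, one_mul]

/-- upper-triangular diagonalisable with equal diagonal entries has zero corner -/
lemma corner_zero (A : Matrix (Fin 2) (Fin 2) ℂ) (htri : A 1 0 = 0)
    (heq : A 0 0 = A 1 1)
    (hd : ∃ P : Matrix (Fin 2) (Fin 2) ℂ, IsUnit P.det ∧ (P⁻¹ * A * P).IsDiag) :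
    A 0 1 = 0 := by
  obtain ⟨P, hP, hdiag⟩ := hd
  set x := A 0 0 with hx
  set N : Matrix (Fin 2) (Fin 2) ℂ := !![0, A 0 1; 0, 0] with hN
  have hAN : A - x • 1 = N := by
    rw [smul1, hN]
    nth_rewrite 1 [Matrix.eta_fin_two A]
    rw [htri, ← heq]
    ext i j
    fin_cases i <;> fin_cases j <;> simp [hx]
  have hN2 : N * N = 0 := by
    rw [hN, Matrix.mul_fin_two]
    ext i j
    fin_cases i <;> fin_cases j <;> simp
  set K : Matrix (Fin 2) (Fin 2) ℂ := P⁻¹ * A * P - x • 1 with hK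
  have hKdiag : K.IsDiag := by
    apply Matrix.IsDiag.sub hdiag
    intro i j hij
    simp [Matrix.one_apply, hij]
  have hKN : K = P⁻¹ * N * P := by
    rw [hK, ← hAN, mul_sub, sub_mul, Matrix.mul_smul, Matrix.smul_mul, Matrix.mul_one,
      Matrix.nonsing_inv_mul P hP]
  have hK2 : K * K = 0 := by
    rw [hKN]
    calc P⁻¹ * N * P * (P⁻¹ * N * P) = P⁻¹ * N * (P * P⁻¹) * N * P := by noncomm_ring
      _ = P⁻¹ * (N * N) * P := by rw [Matrix.mul_nonsing_inv P hP]; noncomm_ring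
      _ = 0 := by rw [hN2]; simp
  have h01 : K 0 1 = 0 := hKdiag (by decide)
  have h10 : K 1 0 = 0 := hKdiag (by decide)
  have h00 : K 0 0 = 0 := by
    have h := congrFun (congrFun hK2 0) 0
    rw [Matrix.mul_apply, Fin.sum_univ_two, h01] at h
    simpa [mul_self_eq_zero] using h
  have h11 : K 1 1 = 0 := by
    have h := congrFun (congrFun hK2 1) 1
    rw [Matrix.mul_apply, Fin.sum_univ_two, h10] at h
    simpa [mul_self_eq_zero] using h
  have hK0 : K = 0 := by
    rw [Matrix.eta_fin_two K, h00, h01, h10, h11]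
    ext i j; fin_cases i <;> fin_cases j <;> simp
  have hN0 : N = 0 := by
    have h : P * K * P⁻¹ = N := by
      rw [hKN]
      calc P * (P⁻¹ * N * P) * P⁻¹ = (P * P⁻¹) * N * (P * P⁻¹) := by noncomm_ring
        _ = N := by rw [Matrix.mul_nonsing_inv P hP]; simp
    rw [← h, hK0]; simp
  have := congrFun (congrFun hN0 0) 1
  simpa [hN] using this

/-- common diagonalizer when D = 0 -/
lemma common_diag (A₁ A₂ : Matrix (Fin 2) (Fin 2) ℂ)
    (htri₁ : A₁ 1 0 = 0) (htri₂ : A₂ 1 0 = 0)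
    (hne₁ : A₁ 0 0 ≠ A₁ 1 1)
    (hD : A₁ 0 1 * (A₂ 0 0 - A₂ 1 1) - A₂ 0 1 * (A₁ 0 0 - A₁ 1 1) = 0) :
    ∃ P : Matrix (Fin 2) (Fin 2) ℂ, IsUnit P.det ∧
      (P⁻¹ * A₁ * P).IsDiag ∧ (P⁻¹ * A₂ * P).IsDiag := by
  set a₁ := A₁ 0 0 with ha₁; set b₁ := A₁ 0 1 with hb₁; set c₁ := A₁ 1 1 with hc₁
  set a₂ := A₂ 0 0 with ha₂; set b₂ := A₂ 0 1 with hb₂; set c₂ := A₂ 1 1 with hc₂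
  set P : Matrix (Fin 2) (Fin 2) ℂ := !![1, b₁; 0, c₁ - a₁] with hPdef
  have hPu : IsUnit P.det := by
    rw [hPdef, Matrix.det_fin_two_of, isUnit_iff_ne_zero]
    intro hcon
    exact hne₁ (by linear_combination -hcon)
  have h1 : A₁ * P = P * !![a₁, 0; 0, c₁] := by
    nth_rewrite 1 [Matrix.eta_fin_two A₁]
    rw [htri₁, ← ha₁, ← hb₁, ← hc₁, hPdef, Matrix.mul_fin_two, Matrix.mul_fin_two]
    ext i j
    fin_cases i <;> fin_cases j <;> simp <;> ring
  have h2 : A₂ * P = P * !![a₂, 0; 0, c₂] := by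
    nth_rewrite 1 [Matrix.eta_fin_two A₂]
    rw [htri₂, ← ha₂, ← hb₂, ← hc₂, hPdef, Matrix.mul_fin_two, Matrix.mul_fin_two]
    ext i j
    fin_cases i <;> fin_cases j <;> simp
    · linear_combination hD
    · ring
  exact ⟨P, hPu, by rw [conj_eq P A₁ _ hPu h1]; exact isDiag_of _ _,
    by rw [conj_eq P A₂ _ hPu h2]; exact isDiag_of _ _⟩

lemma geom_bound (η z : ℂ) (hη : ‖η‖ = 1) (hne : η ≠ 1) (n : ℕ) :
    ‖∑ j ∈ range n, η ^ j * z‖ ≤ 2 * ‖z‖ / ‖η - 1‖ := by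
  have hden : 0 < ‖η - 1‖ := by rw [norm_pos_iff]; exact sub_ne_zero.mpr hne
  rw [← Finset.sum_mul, geom_sum_eq hne, div_mul_eq_mul_div, norm_div, norm_mul]
  have h1 : ‖η ^ n - 1‖ ≤ 2 := by
    calc ‖η ^ n - 1‖ ≤ ‖η ^ n‖ + ‖(1:ℂ)‖ := norm_sub_le _ _
      _ = 2 := by rw [norm_pow, hη]; norm_num
  gcongr

lemma count_even (w : ℂ) : ∀ n : ℕ,
    (∑ j ∈ range n, if j % 2 = 0 then w else 0) = (((n + 1) / 2 : ℕ) : ℂ) * w := by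
  intro n
  induction n with
  | zero => simp
  | succ n ih =>
    rw [Finset.sum_range_succ, ih]
    rcases Nat.even_or_odd n with he | ho
    · have h2 : n % 2 = 0 := Nat.even_iff.mp he
      have h3 : (n + 1 + 1) / 2 = (n + 1) / 2 + 1 := by omega
      rw [if_pos h2, h3]
      push_cast
      ring
    · have h2 : n % 2 = 1 := Nat.odd_iff.mp ho
      have h3 : (n + 1 + 1) / 2 = (n + 1) / 2 := by omega
      rw [if_neg (by omega), h3, add_zero]

lemma norm_lower (a b : ℂ) : ‖b‖ - ‖a‖ ≤ ‖a + b‖ := by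
  have h := norm_add_le (a + b) (-a)
  simp only [add_neg_cancel_comm, norm_neg] at h
  linarith

lemma core (η w T : ℂ) (hη : ‖η‖ = 1) (hw : w ≠ 0) :
    ∃ (e : ℕ → Bool) (δ C : ℝ), 0 < δ ∧ ∀ n : ℕ,
      δ * n - C ≤ ‖∑ j ∈ range n, η ^ j * (T + if e j then w else 0)‖ := by
  have hW : 0 < ‖w‖ := norm_pos_iff.mpr hw
  by_cases h1 : η = 1
  · -- η = 1 : constant choice e
    by_cases hTw : T + w = 0
    · refine ⟨fun _ => false, ‖T‖, 0, ?_, ?_⟩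
      · have hT : T = -w := by linear_combination hTw
        rw [hT, norm_neg]; exact hW
      · intro n
        have : ∑ j ∈ range n, η ^ j * (T + if (false : Bool) = true then w else 0)
            = (n : ℂ) * T := by
          simp [h1]
        rw [this, norm_mul, Complex.norm_natCast]
        nlinarith [norm_nonneg T]
    · refine ⟨fun _ => true, ‖T + w‖, 0, norm_pos_iff.mpr hTw, ?_⟩
      intro n
      have : ∑ j ∈ range n, η ^ j * (T + if (true : Bool) = true then w else 0)
          = (n : ℂ) * (T + w) := by
        simp [h1]; ring
      rw [this, norm_mul, Complex.norm_natCast]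
      nlinarith [norm_nonneg (T + w)]
  by_cases h2 : η = -1
  · -- η = -1 : alternating choice
    subst h2
    refine ⟨fun j => decide (j % 2 = 0), ‖w‖ / 2, ‖T‖, by positivity, ?_⟩
    intro n
    have hsplit : ∑ j ∈ range n, (-1:ℂ) ^ j * (T + if (decide (j % 2 = 0)) = true then w else 0)
        = (∑ j ∈ range n, (-1:ℂ) ^ j * T) + (∑ j ∈ range n, if j % 2 = 0 then w else 0) := by
      rw [← Finset.sum_add_distrib]
      apply Finset.sum_congr rfl
      intro j _
      rcases Nat.even_or_odd j with he | ho
      · rw [he.neg_one_pow]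
        simp [Nat.even_iff.mp he]
      · rw [ho.neg_one_pow]
        simp [Nat.odd_iff.mp ho]
    rw [hsplit, count_even]
    have hb : ‖∑ j ∈ range n, (-1:ℂ) ^ j * T‖ ≤ ‖T‖ := by
      have := geom_bound (-1) T (by norm_num) (by norm_num) n
      have he : ‖(-1:ℂ) - 1‖ = 2 := by norm_num
      rw [he] at this
      calc ‖∑ j ∈ range n, (-1:ℂ) ^ j * T‖ ≤ 2 * ‖T‖ / 2 := this
        _ = ‖T‖ := by ring
    have hcnt : (n : ℝ) / 2 ≤ ((n + 1) / 2 : ℕ) := by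
      have : n ≤ 2 * ((n + 1) / 2) := by omega
      have h := (Nat.cast_le (α := ℝ)).mpr this
      push_cast at h
      linarith
    calc ‖w‖ / 2 * n - ‖T‖ ≤ ((n + 1) / 2 : ℕ) * ‖w‖ - ‖T‖ := by
          have := mul_le_mul_of_nonneg_right hcnt (le_of_lt hW)
          nlinarith
      _ ≤ ‖(((n + 1) / 2 : ℕ) : ℂ) * w‖ - ‖∑ j ∈ range n, (-1:ℂ) ^ j * T‖ := by
          rw [norm_mul, Complex.norm_natCast]
          linarith
      _ ≤ ‖(∑ j ∈ range n, (-1:ℂ) ^ j * T) + (((n + 1) / 2 : ℕ) : ℂ) * w‖ := by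
          exact norm_lower _ _
  · -- general case: η ≠ 1, η ≠ -1
    have hη2 : η ^ 2 ≠ 1 := by
      intro h
      rcases mul_eq_zero.mp (show (η - 1) * (η + 1) = 0 by linear_combination h) with h' | h'
      · exact h1 (by linear_combination h')
      · exact h2 (by linear_combination h')
    have hηsq : ‖η ^ 2‖ = 1 := by rw [norm_pow, hη]; norm_num
    have hd1 : 0 < ‖η - 1‖ := norm_pos_iff.mpr (sub_ne_zero.mpr h1)
    have hd2 : 0 < ‖η ^ 2 - 1‖ := norm_pos_iff.mpr (sub_ne_zero.mpr hη2)
    set W := ‖w‖ with hWdef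
    set x : ℕ → ℝ := fun j => (η ^ j * w).re with hx
    refine ⟨fun j => decide (0 ≤ x j), W / 4,
      2 * ‖T‖ / ‖η - 1‖ + W / ‖η - 1‖ + W / (2 * ‖η ^ 2 - 1‖), by positivity, ?_⟩
    intro n
    have f1 : ∀ j, |x j| ≤ W := by
      intro j
      calc |x j| ≤ ‖η ^ j * w‖ := Complex.abs_re_le_norm _
        _ = W := by rw [norm_mul, norm_pow, hη, one_pow, one_mul]
    have f2 : ∀ j, (x j + (x j) ^ 2 / W) / 2 ≤ (if 0 ≤ x j then x j else 0) := by
      intro j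
      have hb := f1 j
      rw [abs_le] at hb
      by_cases hj : 0 ≤ x j
      · rw [if_pos hj]
        have hdiv : (x j) ^ 2 / W ≤ x j := by
          rw [div_le_iff₀ hW]; nlinarith [hb.2]
        linarith
      · rw [if_neg hj]
        push_neg at hj
        have hdiv : (x j) ^ 2 / W ≤ -x j := by
          rw [div_le_iff₀ hW]; nlinarith [hb.1]
        linarith
    have f3 : -(2 * W / ‖η - 1‖) ≤ ∑ j ∈ range n, x j := by
      have he : ∑ j ∈ range n, x j = (∑ j ∈ range n, η ^ j * w).re := by
        rw [Complex.re_sum]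
      rw [he]
      have hb := geom_bound η w hη h1 n
      rw [← hWdef] at hb
      have habs := Complex.abs_re_le_norm (∑ j ∈ range n, η ^ j * w)
      rw [abs_le] at habs
      linarith [habs.1]
    have f4 : (n : ℝ) * W ^ 2 / 2 - W ^ 2 / ‖η ^ 2 - 1‖ ≤ ∑ j ∈ range n, (x j) ^ 2 := by
      have hpt : ∀ j, (x j) ^ 2 = W ^ 2 / 2 + ((η ^ 2) ^ j * w ^ 2).re / 2 := by
        intro j
        have hz2 : (η ^ 2) ^ j * w ^ 2 = (η ^ j * w) ^ 2 := by ring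
        rw [hz2]
        have hns : Complex.normSq (η ^ j * w) = W ^ 2 := by
          rw [Complex.normSq_eq_norm_sq]
          rw [show ‖η ^ j * w‖ = W from by
            rw [norm_mul, norm_pow, hη, one_pow, one_mul]]
        have : (x j) ^ 2 = (Complex.normSq (η ^ j * w) + ((η ^ j * w) ^ 2).re) / 2 := by
          simp only [hx, Complex.normSq_apply, pow_two, Complex.mul_re]
          ring
        rw [this, hns]
        ring
      rw [Finset.sum_congr rfl (fun j _ => hpt j)]
      rw [Finset.sum_add_distrib, Finset.sum_const, card_range]
      have hre : ∑ j ∈ range n, ((η ^ 2) ^ j * w ^ 2).re / 2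
          = (∑ j ∈ range n, (η ^ 2) ^ j * w ^ 2).re / 2 := by
        rw [Complex.re_sum, Finset.sum_div]
      rw [hre]
      have hb := geom_bound (η ^ 2) (w ^ 2) hηsq hη2 n
      have habs := Complex.abs_re_le_norm (∑ j ∈ range n, (η ^ 2) ^ j * w ^ 2)
      rw [abs_le] at habs
      have hw2 : ‖w ^ 2‖ = W ^ 2 := by rw [norm_pow, ← hWdef]
      have h2eq : 2 * W ^ 2 / ‖η ^ 2 - 1‖ = 2 * (W ^ 2 / ‖η ^ 2 - 1‖) := by ring
      have hkey : -(W ^ 2 / ‖η ^ 2 - 1‖) ≤ (∑ j ∈ range n, (η ^ 2) ^ j * w ^ 2).re / 2 := by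
        rw [hw2] at hb
        linarith [habs.1, h2eq]
      rw [nsmul_eq_mul]
      have hr : (n : ℝ) * (W ^ 2 / 2) = (n : ℝ) * W ^ 2 / 2 := by ring
      linarith [hkey, hr]
    -- split the main sum
    have hsplit : ∑ j ∈ range n, η ^ j * (T + if (decide (0 ≤ x j)) = true then w else 0)
        = (∑ j ∈ range n, η ^ j * T) + ∑ j ∈ range n, (if 0 ≤ x j then η ^ j * w else 0) := by
      rw [← Finset.sum_add_distrib]
      apply Finset.sum_congr rfl
      intro j _
      by_cases hj : 0 ≤ x j <;> simp [hj] <;> ring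
    have hre2 : (∑ j ∈ range n, (if 0 ≤ x j then η ^ j * w else 0)).re
        = ∑ j ∈ range n, (if 0 ≤ x j then x j else 0) := by
      rw [Complex.re_sum]
      apply Finset.sum_congr rfl
      intro j _
      by_cases hj : 0 ≤ x j
      · rw [if_pos hj, if_pos hj]
      · rw [if_neg hj, if_neg hj, Complex.zero_re]
    have hsum_ite : ∑ j ∈ range n, (if 0 ≤ x j then x j else 0)
        ≥ (∑ j ∈ range n, x j) / 2 + (∑ j ∈ range n, (x j) ^ 2) / (2 * W) := by
      have := Finset.sum_le_sum (fun j (_ : j ∈ range n) => f2 j)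
      calc (∑ j ∈ range n, x j) / 2 + (∑ j ∈ range n, (x j) ^ 2) / (2 * W)
          = (∑ j ∈ range n, x j / 2) + ∑ j ∈ range n, (x j) ^ 2 / (2 * W) := by
            rw [Finset.sum_div, Finset.sum_div]
        _ = ∑ j ∈ range n, (x j / 2 + (x j) ^ 2 / (2 * W)) := Finset.sum_add_distrib.symm
        _ = ∑ j ∈ range n, (x j + (x j) ^ 2 / W) / 2 := by
            apply Finset.sum_congr rfl
            intro j _
            ring
        _ ≤ _ := this
    have hTre : -(2 * ‖T‖ / ‖η - 1‖) ≤ (∑ j ∈ range n, η ^ j * T).re := by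
      have hb := geom_bound η T hη h1 n
      have habs := Complex.abs_re_le_norm (∑ j ∈ range n, η ^ j * T)
      rw [abs_le] at habs
      linarith [habs.1]
    calc W / 4 * n - (2 * ‖T‖ / ‖η - 1‖ + W / ‖η - 1‖ + W / (2 * ‖η ^ 2 - 1‖))
        ≤ (∑ j ∈ range n, η ^ j * T).re + ∑ j ∈ range n, (if 0 ≤ x j then x j else 0) := by
          have hx2 : ((n : ℝ) * W ^ 2 / 2 - W ^ 2 / ‖η ^ 2 - 1‖) / (2 * W)
              ≤ (∑ j ∈ range n, (x j) ^ 2) / (2 * W) := by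
            gcongr
          have hsimp : ((n : ℝ) * W ^ 2 / 2 - W ^ 2 / ‖η ^ 2 - 1‖) / (2 * W)
              = (n : ℝ) * W / 4 - W / (2 * ‖η ^ 2 - 1‖) := by
            field_simp
            ring
          rw [hsimp] at hx2
          have hx1 : -(2 * W / ‖η - 1‖) / 2 ≤ (∑ j ∈ range n, x j) / 2 := by linarith [f3]
          have hx1' : -(2 * W / ‖η - 1‖) / 2 = -(W / ‖η - 1‖) := by ring
          linarith [hsum_ite, hTre]
      _ = (∑ j ∈ range n, η ^ j * (T + if (decide (0 ≤ x j)) = true then w else 0)).re := by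
          rw [hsplit, Complex.add_re, hre2]
      _ ≤ ‖∑ j ∈ range n, η ^ j * (T + if (decide (0 ≤ x j)) = true then w else 0)‖ :=
          Complex.re_le_norm _


noncomputable def d0seq (A : Fin 2 → Matrix (Fin 2) (Fin 2) ℂ) (σ : ℕ → Fin 2) (n : ℕ) : ℂ :=
  ∏ j ∈ Finset.range n, A (σ (j + 1)) 0 0

noncomputable def d1seq (A : Fin 2 → Matrix (Fin 2) (Fin 2) ℂ) (σ : ℕ → Fin 2) (n : ℕ) : ℂ :=
  ∏ j ∈ Finset.range n, A (σ (j + 1)) 1 1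

noncomputable def tpseq (A : Fin 2 → Matrix (Fin 2) (Fin 2) ℂ) (σ : ℕ → Fin 2) : ℕ → ℂ
  | 0 => 0
  | n + 1 => A (σ (n + 1)) 0 0 * tpseq A σ n + A (σ (n + 1)) 0 1 * d1seq A σ n

lemma prodW_eq (A : Fin 2 → Matrix (Fin 2) (Fin 2) ℂ) (σ : ℕ → Fin 2)
    (h : ∀ i, A i 1 0 = 0) (n : ℕ) :
    prodW A σ n = !![d0seq A σ n, tpseq A σ n; 0, d1seq A σ n] := by
  induction n with
  | zero =>
    rw [prodW, d0seq, d1seq, tpseq]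
    simp [Matrix.one_fin_two]
  | succ n ih =>
    rw [prodW, ih]
    nth_rewrite 1 [Matrix.eta_fin_two (A (σ (n + 1)))]
    rw [h (σ (n + 1)), Matrix.mul_fin_two]
    have e0 : d0seq A σ (n + 1) = d0seq A σ n * A (σ (n + 1)) 0 0 := Finset.prod_range_succ _ _
    have e1 : d1seq A σ (n + 1) = d1seq A σ n * A (σ (n + 1)) 1 1 := Finset.prod_range_succ _ _
    rw [e0, e1, tpseq]
    ext i j
    fin_cases i <;> fin_cases j <;> simp <;> ring

def sige (e : ℕ → Bool) (n : ℕ) : Fin 2 :=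
  if e ((n - 1) / 2) = decide ((n - 1) % 2 = 0) then 0 else 1

lemma sige_odd (e : ℕ → Bool) (k : ℕ) : sige e (2 * k + 1) = if e k then 0 else 1 := by
  unfold sige
  have h1 : (2 * k + 1 - 1) / 2 = k := by omega
  have h2 : (2 * k + 1 - 1) % 2 = 0 := by omega
  rw [h1, h2]
  cases e k <;> simp

lemma sige_even (e : ℕ → Bool) (k : ℕ) : sige e (2 * k + 2) = if e k then 1 else 0 := by
  unfold sige
  have h1 : (2 * k + 2 - 1) / 2 = k := by omega
  have h2 : (2 * k + 2 - 1) % 2 = 1 := by omega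
  rw [h1, h2]
  cases e k <;> simp

lemma closed_form (p q T w : ℂ) (hp : p ≠ 0) (e : ℕ → Bool) (t : ℕ → ℂ)
    (h0 : t 0 = 0)
    (hrec : ∀ k, t (k + 1) = p * t k + (T + if e k then w else 0) * q ^ k) :
    ∀ k, t k = p ^ k * p⁻¹ * ∑ j ∈ range k, (q * p⁻¹) ^ j * (T + if e j then w else 0) := by
  intro k
  induction k with
  | zero => simp [h0]
  | succ k ih =>
    rw [hrec k, ih, Finset.sum_range_succ]
    rw [mul_pow, inv_pow]
    field_simp
    ring

lemma d1seq_even (A₁ A₂ : Matrix (Fin 2) (Fin 2) ℂ) (e : ℕ → Bool) (k : ℕ) :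
    d1seq ![A₁, A₂] (sige e) (2 * k) = (A₁ 1 1 * A₂ 1 1) ^ k := by
  induction k with
  | zero => simp [d1seq]
  | succ k ih =>
    have h2 : 2 * (k + 1) = (2 * k) + 1 + 1 := by ring
    rw [h2]
    unfold d1seq
    rw [Finset.prod_range_succ, Finset.prod_range_succ]
    have hd : ∏ j ∈ range (2 * k), ![A₁, A₂] (sige e (j + 1)) 1 1 = (A₁ 1 1 * A₂ 1 1) ^ k := ih
    rw [hd, sige_odd, sige_even]
    cases he : e k <;> simp [he] <;> ring

lemma d1seq_odd (A₁ A₂ : Matrix (Fin 2) (Fin 2) ℂ) (e : ℕ → Bool) (k : ℕ) :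
    d1seq ![A₁, A₂] (sige e) (2 * k + 1)
      = (A₁ 1 1 * A₂ 1 1) ^ k * (if e k then A₁ 1 1 else A₂ 1 1) := by
  unfold d1seq
  rw [Finset.prod_range_succ]
  have hd : ∏ j ∈ range (2 * k), ![A₁, A₂] (sige e (j + 1)) 1 1 = (A₁ 1 1 * A₂ 1 1) ^ k :=
    d1seq_even A₁ A₂ e k
  rw [hd, sige_odd]
  cases he : e k <;> simp [he]

lemma tpseq_even_rec (A₁ A₂ : Matrix (Fin 2) (Fin 2) ℂ) (e : ℕ → Bool) (k : ℕ) :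
    tpseq ![A₁, A₂] (sige e) (2 * (k + 1))
      = (A₁ 0 0 * A₂ 0 0) * tpseq ![A₁, A₂] (sige e) (2 * k)
        + ((A₁ 0 0 * A₂ 0 1 + A₁ 0 1 * A₂ 1 1)
            + if e k then (A₂ 0 0 * A₁ 0 1 + A₂ 0 1 * A₁ 1 1)
                - (A₁ 0 0 * A₂ 0 1 + A₁ 0 1 * A₂ 1 1) else 0)
          * (A₁ 1 1 * A₂ 1 1) ^ k := by
  have h2 : 2 * (k + 1) = (2 * k + 1) + 1 := by ring
  rw [h2, tpseq, tpseq]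
  have h3 : 2 * k + 1 + 1 = 2 * k + 2 := by ring
  rw [h3, sige_odd, sige_even, d1seq_odd, d1seq_even]
  cases he : e k <;> simp [he] <;> ring

/-- for two upper-triangular, individually diagonalisable but not
simultaneously diagonalisable 2×2 complex matrices of spectral radius 1 and
unimodular determinant, some trajectory grows at least linearly. -/
theorem stmt15 (A₁ A₂ : Matrix (Fin 2) (Fin 2) ℂ)
    (htri₁ : A₁ 1 0 = 0) (htri₂ : A₂ 1 0 = 0)
    (hd₁ : ∃ P : Matrix (Fin 2) (Fin 2) ℂ, IsUnit P.det ∧ (P⁻¹ * A₁ * P).IsDiag)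
    (hd₂ : ∃ P : Matrix (Fin 2) (Fin 2) ℂ, IsUnit P.det ∧ (P⁻¹ * A₂ * P).IsDiag)
    (hnsd : ¬ ∃ P : Matrix (Fin 2) (Fin 2) ℂ, IsUnit P.det ∧
      (P⁻¹ * A₁ * P).IsDiag ∧ (P⁻¹ * A₂ * P).IsDiag)
    (hsr₁ : spectralRadius ℂ A₁ = 1) (hsr₂ : spectralRadius ℂ A₂ = 1)
    (hdet₁ : ‖A₁.det‖ = 1) (hdet₂ : ‖A₂.det‖ = 1) :
    ∃ σ : ℕ → Fin 2, ∃ v : EuclideanSpace ℂ (Fin 2), v ≠ 0 ∧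
      0 < Filter.liminf
        (fun n : ℕ => (1 : ℝ) / n * ‖Matrix.toEuclideanLin (prodW ![A₁, A₂] σ n) v‖)
        Filter.atTop := by
  obtain ⟨ha1, hc1⟩ := unimod A₁ htri₁ hsr₁ hdet₁
  obtain ⟨ha2, hc2⟩ := unimod A₂ htri₂ hsr₂ hdet₂
  -- A₁ has distinct diagonal entries
  have hne₁ : A₁ 0 0 ≠ A₁ 1 1 := by
    intro heq
    have hb := corner_zero A₁ htri₁ heq hd₁
    have hsc : A₁ = A₁ 0 0 • 1 := by
      rw [smul1]
      conv_lhs => rw [Matrix.eta_fin_two A₁]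
      rw [htri₁, hb, ← heq]
    obtain ⟨P, hP, hPd⟩ := hd₂
    refine hnsd ⟨P, hP, ?_, hPd⟩
    rw [hsc]
    have h1 : P⁻¹ * (A₁ 0 0 • 1) * P = A₁ 0 0 • 1 := by
      rw [Matrix.mul_smul, Matrix.mul_one, Matrix.smul_mul, Matrix.nonsing_inv_mul P hP]
    rw [h1]
    intro i j hij
    simp [Matrix.smul_apply, Matrix.one_apply, hij]
  -- the key quantity w is nonzero
  set w : ℂ := (A₂ 0 0 * A₁ 0 1 + A₂ 0 1 * A₁ 1 1)
      - (A₁ 0 0 * A₂ 0 1 + A₁ 0 1 * A₂ 1 1) with hwdef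
  have hw : w ≠ 0 := by
    intro h0
    have hD : A₁ 0 1 * (A₂ 0 0 - A₂ 1 1) - A₂ 0 1 * (A₁ 0 0 - A₁ 1 1) = 0 := by
      rw [hwdef] at h0
      linear_combination h0
    exact hnsd (common_diag A₁ A₂ htri₁ htri₂ hne₁ hD)
  set p : ℂ := A₁ 0 0 * A₂ 0 0 with hpdef
  set q : ℂ := A₁ 1 1 * A₂ 1 1 with hqdef
  set T : ℂ := A₁ 0 0 * A₂ 0 1 + A₁ 0 1 * A₂ 1 1 with hTdef
  have hpn : ‖p‖ = 1 := by rw [hpdef, norm_mul, ha1, ha2]; norm_num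
  have hqn : ‖q‖ = 1 := by rw [hqdef, norm_mul, hc1, hc2]; norm_num
  have hp0 : p ≠ 0 := by intro h; rw [h] at hpn; simp at hpn
  have hηn : ‖q * p⁻¹‖ = 1 := by rw [norm_mul, norm_inv, hpn, hqn]; norm_num
  obtain ⟨e, δ, C, hδ, hcore⟩ := core (q * p⁻¹) w T hηn hw
  set σ : ℕ → Fin 2 := sige e with hσdef
  set A : Fin 2 → Matrix (Fin 2) (Fin 2) ℂ := ![A₁, A₂] with hAdef
  have htriA : ∀ i, A i 1 0 = 0 := by
    intro i; fin_cases i <;> simpa [hAdef]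
  have hA00 : ∀ i, ‖A i 0 0‖ = 1 := by
    intro i; fin_cases i <;> simpa [hAdef]
  have hA11 : ∀ i, ‖A i 1 1‖ = 1 := by
    intro i; fin_cases i <;> simpa [hAdef]
  set Mb : ℝ := max ‖A₁ 0 1‖ ‖A₂ 0 1‖ with hMbdef
  have hMb0 : 0 ≤ Mb := le_trans (norm_nonneg _) (le_max_left _ _)
  have hA01 : ∀ i, ‖A i 0 1‖ ≤ Mb := by
    intro i; fin_cases i
    · exact le_max_left ‖A₁ 0 1‖ ‖A₂ 0 1‖
    · exact le_max_right ‖A₁ 0 1‖ ‖A₂ 0 1‖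
  -- closed form for even steps
  have hrec : ∀ k, tpseq A σ (2 * (k + 1))
      = p * tpseq A σ (2 * k) + (T + if e k then w else 0) * q ^ k := by
    intro k
    have h := tpseq_even_rec A₁ A₂ e k
    rw [← hAdef, ← hσdef] at h
    rw [h, ← hpdef, ← hqdef, ← hTdef, ← hwdef]
  have hcf0 := closed_form p q T w hp0 e (fun k => tpseq A σ (2 * k)) (by simp [tpseq])
    (fun k => hrec k)
  have hcf : ∀ k : ℕ, tpseq A σ (2 * k)
      = p ^ k * p⁻¹ * ∑ j ∈ range k, (q * p⁻¹) ^ j * (T + if e j then w else 0) :=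
    fun k => hcf0 k
  have hlow2k : ∀ k : ℕ, δ * k - C ≤ ‖tpseq A σ (2 * k)‖ := by
    intro k
    have h1 : ‖tpseq A σ (2 * k)‖
        = ‖∑ j ∈ range k, (q * p⁻¹) ^ j * (T + if e j then w else 0)‖ := by
      rw [hcf k, norm_mul, norm_mul, norm_pow, hpn, norm_inv, hpn]
      norm_num
    rw [h1]
    exact hcore k
  -- norm of the lower-right entry is always 1
  have hd1n : ∀ n, ‖d1seq A σ n‖ = 1 := by
    intro n
    rw [d1seq, norm_prod]
    exact Finset.prod_eq_one (fun j _ => hA11 _)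
  -- one-step bounds for the top entry
  have hstep : ∀ n, ‖tpseq A σ n‖ - Mb ≤ ‖tpseq A σ (n + 1)‖ ∧
      ‖tpseq A σ (n + 1)‖ ≤ ‖tpseq A σ n‖ + Mb := by
    intro n
    have he : tpseq A σ (n + 1)
        = A (σ (n + 1)) 0 0 * tpseq A σ n + A (σ (n + 1)) 0 1 * d1seq A σ n := rfl
    have h1 : ‖A (σ (n + 1)) 0 0 * tpseq A σ n‖ = ‖tpseq A σ n‖ := by
      rw [norm_mul, hA00, one_mul]
    have h2 : ‖A (σ (n + 1)) 0 1 * d1seq A σ n‖ ≤ Mb := by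
      rw [norm_mul, hd1n, mul_one]
      exact hA01 _
    constructor
    · rw [he]
      have hlb := norm_lower (A (σ (n + 1)) 0 1 * d1seq A σ n) (A (σ (n + 1)) 0 0 * tpseq A σ n)
      rw [add_comm (A (σ (n + 1)) 0 1 * d1seq A σ n)] at hlb
      rw [h1] at hlb
      linarith [h2, hlb]
    · rw [he]
      calc ‖A (σ (n + 1)) 0 0 * tpseq A σ n + A (σ (n + 1)) 0 1 * d1seq A σ n‖
          ≤ ‖A (σ (n + 1)) 0 0 * tpseq A σ n‖ + ‖A (σ (n + 1)) 0 1 * d1seq A σ n‖ :=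
            norm_add_le _ _
        _ ≤ ‖tpseq A σ n‖ + Mb := by rw [h1]; linarith [h2]
  have hupper : ∀ n : ℕ, ‖tpseq A σ n‖ ≤ n * Mb := by
    intro n
    induction n with
    | zero => simp [tpseq]
    | succ n ih =>
      have := (hstep n).2
      push_cast
      nlinarith [this, ih]
  set C₂ : ℝ := C + Mb + δ with hC₂def
  have hlow : ∀ n : ℕ, δ / 2 * n - C₂ ≤ ‖tpseq A σ n‖ := by
    intro n
    rcases Nat.even_or_odd n with ⟨k, hk⟩ | ⟨k, hk⟩
    · have hk2 : n = 2 * k := by omega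
      subst hk2
      have := hlow2k k
      push_cast
      linarith [this]
    · subst hk
      have h1 := (hstep (2 * k)).1
      have h2 := hlow2k k
      push_cast
      linarith [h1, h2]
  -- the vector
  set v : EuclideanSpace ℂ (Fin 2) := EuclideanSpace.single (1 : Fin 2) (1 : ℂ) with hvdef
  have hv : v ≠ 0 := by
    intro h
    have h1 : v 1 = 1 := by simp [hvdef]
    rw [h] at h1
    simp at h1
  -- components of the image vector
  have hmv : ∀ n, (Matrix.toEuclideanLin (prodW A σ n)) v 0 = tpseq A σ n ∧
      (Matrix.toEuclideanLin (prodW A σ n)) v 1 = d1seq A σ n := by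
    intro n
    rw [Matrix.toEuclideanLin_apply, prodW_eq A σ htriA n]
    constructor
    · simp [Matrix.mulVec, dotProduct, Fin.sum_univ_two, hvdef, EuclideanSpace.single_apply]
    · simp [Matrix.mulVec, dotProduct, Fin.sum_univ_two, hvdef, EuclideanSpace.single_apply]
  have hnorm_eq : ∀ n, ‖(Matrix.toEuclideanLin (prodW A σ n)) v‖
      = Real.sqrt (‖tpseq A σ n‖ ^ 2 + 1) := by
    intro n
    rw [EuclideanSpace.norm_eq, Fin.sum_univ_two, (hmv n).1, (hmv n).2, hd1n]
    norm_num
  have hnlow : ∀ n, ‖tpseq A σ n‖ ≤ ‖(Matrix.toEuclideanLin (prodW A σ n)) v‖ := by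
    intro n
    rw [hnorm_eq n]
    have : ‖tpseq A σ n‖ = Real.sqrt (‖tpseq A σ n‖ ^ 2) := by
      rw [Real.sqrt_sq (norm_nonneg _)]
    rw [this]
    apply Real.sqrt_le_sqrt
    nlinarith [Real.sq_sqrt (show (0:ℝ) ≤ ‖tpseq A σ n‖ ^ 2 by positivity)]
  have hnup : ∀ n, ‖(Matrix.toEuclideanLin (prodW A σ n)) v‖ ≤ ‖tpseq A σ n‖ + 1 := by
    intro n
    rw [hnorm_eq n]
    have h1 : ‖tpseq A σ n‖ ^ 2 + 1 ≤ (‖tpseq A σ n‖ + 1) ^ 2 := by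
      nlinarith [norm_nonneg (tpseq A σ n)]
    calc Real.sqrt (‖tpseq A σ n‖ ^ 2 + 1) ≤ Real.sqrt ((‖tpseq A σ n‖ + 1) ^ 2) :=
          Real.sqrt_le_sqrt h1
      _ = ‖tpseq A σ n‖ + 1 := Real.sqrt_sq (by positivity)
  refine ⟨σ, v, hv, ?_⟩
  set g : ℕ → ℝ := fun n => (1 : ℝ) / n * ‖(Matrix.toEuclideanLin (prodW A σ n)) v‖ with hgdef
  have hgb : ∀ n, g n ≤ Mb + 2 := by
    intro n
    rcases Nat.eq_zero_or_pos n with rfl | hn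
    · simp [hgdef]
      linarith
    · have hn' : (0:ℝ) < n := by exact_mod_cast hn
      have h1 : g n ≤ 1 / n * (n * Mb + 2) := by
        rw [hgdef]
        apply mul_le_mul_of_nonneg_left _ (by positivity)
        calc ‖(Matrix.toEuclideanLin (prodW A σ n)) v‖ ≤ ‖tpseq A σ n‖ + 1 := hnup n
          _ ≤ n * Mb + 2 := by linarith [hupper n]
      calc g n ≤ 1 / n * (n * Mb + 2) := h1
        _ = Mb + 2 / n := by field_simp
        _ ≤ Mb + 2 := by
            have hn1 : (1:ℝ) ≤ n := by exact_mod_cast hn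
            have : 2 / (n:ℝ) ≤ 2 := by
              rw [div_le_iff₀ hn']
              linarith
            linarith
  have hcb : Filter.IsBoundedUnder (· ≤ ·) Filter.atTop g :=
    Filter.isBoundedUnder_of ⟨Mb + 2, hgb⟩
  have hev : ∀ᶠ n in Filter.atTop, δ / 4 ≤ g n := by
    rw [Filter.eventually_atTop]
    refine ⟨⌈4 * C₂ / δ⌉₊ + 1, fun n hn => ?_⟩
    have hn1 : 1 ≤ n := le_trans (Nat.le_add_left 1 _) hn
    have hn' : (0:ℝ) < n := by exact_mod_cast hn1
    have hnb : 4 * C₂ / δ ≤ (n : ℝ) := by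
      calc 4 * C₂ / δ ≤ (⌈4 * C₂ / δ⌉₊ : ℝ) := Nat.le_ceil _
        _ ≤ (n : ℝ) := by exact_mod_cast le_trans (Nat.le_succ _) hn
    have hC2n : C₂ / n ≤ δ / 4 := by
      rw [div_le_iff₀ hn']
      rw [div_le_iff₀ hδ] at hnb
      nlinarith [hnb]
    have h1 : 1 / (n:ℝ) * (δ / 2 * n - C₂) ≤ g n := by
      rw [hgdef]
      apply mul_le_mul_of_nonneg_left _ (by positivity)
      exact le_trans (hlow n) (hnlow n)
    have h2 : 1 / (n:ℝ) * (δ / 2 * n - C₂) = δ / 2 - C₂ / n := by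
      have hne : (n:ℝ) ≠ 0 := ne_of_gt hn'
      calc 1 / (n:ℝ) * (δ / 2 * n - C₂) = δ / 2 * ((n:ℝ) / n) - C₂ / n := by ring
        _ = δ / 2 - C₂ / n := by rw [div_self hne, mul_one]
    rw [h2] at h1
    linarith
  calc (0:ℝ) < δ / 4 := by positivity
    _ ≤ Filter.liminf g Filter.atTop :=
      Filter.le_liminf_of_le hcb.isCoboundedUnder_ge hev
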